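/- Let p be a prime, q = p^r with r ≥ 1, and m, n ≥ 1. The number of pairs of weakly increasing tuples 0 ≤ a₁ ≤ ⋯ ≤ a_m < q and 0 ≤ b₁ ≤ ⋯ ≤ b_n < q such that p does not divide a_i + b_j for all i, j, equals ∑_{l=1}^{min(p-1,n)} C(p,l) · C(q - (q/p)·l + m - 1, m) · ∑_{n₁+⋯+n_l = n, n_j > 0} ∏_{j=1}^{l} C(q/p + n_j - 1, n_j). -/

import Mathlib

open Finset
open scoped Classical

lemma filter_finset_sum {α ι : Type*} (p : α → Prop) [DecidablePred p]
    (s : Finset ι) (f : ι → Multiset α) :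
    Multiset.filter p (∑ i ∈ s, f i) = ∑ i ∈ s, Multiset.filter p (f i) := by
  classical
  induction s using Finset.cons_induction with
  | empty => simp
  | cons a s ha ih => rw [Finset.sum_cons, Finset.sum_cons, Multiset.filter_add, ih]

lemma card_finset_sum {α ι : Type*} (s : Finset ι) (f : ι → Multiset α) :
    Multiset.card (∑ i ∈ s, f i) = ∑ i ∈ s, Multiset.card (f i) := by
  classical
  induction s using Finset.cons_induction with
  | empty => simp
  | cons a s ha ih => rw [Finset.sum_cons, Finset.sum_cons, Multiset.card_add, ih]

lemma multiset_partition {α β : Type*} [DecidableEq β] {l : ℕ}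
    (res : α → β) (e : Fin l → β) (he : Function.Injective e)
    (s : Multiset α) (h : ∀ x ∈ s, ∃ j, res x = e j) :
    ∑ j : Fin l, s.filter (fun x => res x = e j) = s := by
  classical
  ext a
  rw [Multiset.count_sum']
  by_cases ha : a ∈ s
  · obtain ⟨j0, hj0⟩ := h a ha
    rw [Finset.sum_eq_single j0]
    · rw [Multiset.count_filter, if_pos hj0]
    · intro j _ hj
      rw [Multiset.count_filter, if_neg]
      intro hc
      exact hj (he (hc ▸ hj0).symm ▸ rfl)
    · intro hj; exact absurd (mem_univ j0) hj
  · rw [Multiset.count_eq_zero_of_notMem ha]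
    refine Finset.sum_eq_zero fun j _ => ?_
    exact Multiset.count_eq_zero_of_notMem (fun hm => ha (Multiset.mem_of_mem_filter hm))

lemma card_finset_sym {α : Type*} [DecidableEq α] (s : Finset α) (k : ℕ) :
    (s.sym k).card = (s.card + k - 1).choose k := by
  classical
  have h : (s.sym k).card = (univ : Finset (Sym (↥s) k)).card := by
    refine (Finset.card_bij (fun B _ => B.map Subtype.val) ?_ ?_ ?_).symm
    · intro B _; rw [Finset.mem_sym_iff]
      intro a ha
      rw [Sym.mem_map] at ha
      obtain ⟨b, _, rfl⟩ := ha
      exact b.2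
    · intro B1 _ B2 _ h
      exact Sym.map_injective Subtype.val_injective _ h
    · intro B hB
      rw [Finset.mem_sym_iff] at hB
      refine ⟨⟨B.1.attach.map (fun x => (⟨x.1, hB x.1 x.2⟩ : ↥s)), by simp⟩, mem_univ _, ?_⟩
      apply Subtype.ext
      show Multiset.map _ _ = B.1
      simp [Multiset.map_map]
  rw [h, Finset.card_univ, Sym.card_sym_eq_choose, Fintype.card_coe]

lemma fiber_card (p r : ℕ) (hp : p.Prime) (hr : 1 ≤ r) (c : ZMod p) :
    (univ.filter (fun x : Fin (p ^ r) => ((x : ℕ) : ZMod p) = c)).card = p ^ (r - 1) := by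
  haveI : NeZero p := ⟨hp.pos.ne'⟩
  have hppos : 0 < p := hp.pos
  have hpr : p ^ (r - 1) * p = p ^ r := by
    rw [← pow_succ, Nat.sub_add_cancel hr]
  have hcv : c.val < p := ZMod.val_lt c
  have key : (univ.filter (fun x : Fin (p ^ r) => ((x : ℕ) : ZMod p) = c)).card
      = (univ : Finset (Fin (p ^ (r - 1)))).card := by
    refine Finset.card_bij' (fun x _ => ⟨(x : ℕ) / p, ?_⟩)
      (fun y _ => ⟨p * (y : ℕ) + c.val, ?_⟩) ?_ ?_ ?_ ?_
    · exact Nat.div_lt_of_lt_mul (by rw [mul_comm, hpr]; exact x.2)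
    · calc p * (y : ℕ) + c.val < p * ((y : ℕ) + 1) := by
            rw [Nat.mul_add, Nat.mul_one]; omega
        _ ≤ p * p ^ (r - 1) := by
            exact Nat.mul_le_mul_left p (Nat.succ_le_of_lt y.2)
        _ = p ^ r := by rw [mul_comm, hpr]
    · intro x _; exact mem_univ _
    · intro y _
      simp only [mem_filter, mem_univ, true_and]
      push_cast
      simp [ZMod.natCast_self, ZMod.natCast_val, ZMod.cast_id]
    · intro x hx
      simp only [mem_filter, mem_univ, true_and] at hx
      have hmod : (x : ℕ) % p = c.val := by
        have := ZMod.val_natCast (n := p) (a := (x : ℕ))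
        rw [hx] at this
        omega
      apply Fin.ext
      simp only []
      have := Nat.div_add_mod (x : ℕ) p
      omega
    · intro y _
      apply Fin.ext
      simp only []
      rw [Nat.mul_add_div hppos, Nat.div_eq_of_lt hcv]
      omega
  rw [key, Finset.card_univ, Fintype.card_fin]

lemma cardB (p r n : ℕ) (hp : p.Prime) (hr : 1 ≤ r) (hn : 1 ≤ n) (T : Finset (ZMod p)) :
    ((univ : Finset (Sym (Fin (p ^ r)) n)).filter
        (fun B => (Multiset.map (fun x : Fin (p ^ r) => ((x : ℕ) : ZMod p)) B.1).toFinset = T)).card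
      = ∑ t ∈ (Finset.Nat.antidiagonalTuple T.card n).filter (fun t => ∀ j, 0 < t j),
          ∏ j, (p ^ (r - 1) + t j - 1).choose (t j) := by
  classical
  set q := p ^ r with hq
  set res : Fin q → ZMod p := fun x => ((x : ℕ) : ZMod p) with hresd
  set l := T.card with hl
  set e : Fin l → ZMod p := fun j => (T.equivFin.symm j : ZMod p) with he_def
  have he : Function.Injective e := fun a b hab => T.equivFin.symm.injective (Subtype.ext hab)
  have heT : ∀ j, e j ∈ T := fun j => (T.equivFin.symm j).2
  have hTe : ∀ c ∈ T, ∃ j, e j = c := fun c hc =>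
    ⟨T.equivFin ⟨c, hc⟩, by simp [he_def]⟩
  set cnt : Sym (Fin q) n → (Fin l → ℕ) :=
    fun B j => (Multiset.card (B.1.filter (fun x => res x = e j))) with hcnt
  have hsupp_mem : ∀ B : Sym (Fin q) n,
      (Multiset.map res B.1).toFinset = T → ∀ x ∈ B.1, ∃ j, res x = e j := by
    intro B hB x hx
    have hx2 : res x ∈ T := by
      rw [← hB]
      exact Multiset.mem_toFinset.2 (Multiset.mem_map_of_mem _ hx)
    obtain ⟨j, hj⟩ := hTe _ hx2
    exact ⟨j, hj.symm⟩
  have hpart : ∀ B : Sym (Fin q) n, (Multiset.map res B.1).toFinset = T →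
      ∑ j : Fin l, B.1.filter (fun x => res x = e j) = B.1 :=
    fun B hB => multiset_partition res e he B.1 (hsupp_mem B hB)
  rw [Finset.card_eq_sum_card_fiberwise (f := cnt)
      (t := (Finset.Nat.antidiagonalTuple l n).filter (fun t => ∀ j, 0 < t j)) ?_]
  · refine Finset.sum_congr rfl fun t ht => ?_
    rw [Finset.mem_filter, Finset.Nat.mem_antidiagonalTuple] at ht
    obtain ⟨hts, htp⟩ := ht
    rw [Finset.filter_filter]
    have key : ((univ : Finset (Sym (Fin q) n)).filter
        (fun B => (Multiset.map res B.1).toFinset = T ∧ cnt B = t)).card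
        = (Fintype.piFinset
            (fun j : Fin l => ((univ.filter (fun x : Fin q => res x = e j)).sym (t j)))).card := by
      refine Finset.card_bij'
        (fun B hB => fun j => (⟨B.1.filter (fun x => res x = e j), by
          have := (Finset.mem_filter.1 hB).2.2
          exact congrFun this j⟩ : Sym (Fin q) (t j)))
        (fun C hC => (⟨∑ k : Fin l, (C k).1, by
          rw [card_finset_sum]
          have : ∀ k, Multiset.card ((C k).1) = t k := fun k => (C k).2
          simp only [this]
          exact hts⟩ : Sym (Fin q) n)) ?_ ?_ ?_ ?_
      · -- forward lands in piFinset
        intro B hB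
        refine Fintype.mem_piFinset.2 ?_
        intro j
        refine Finset.mem_sym_iff.2 ?_
        intro a ha
        have ha' : a ∈ B.1.filter (fun x => res x = e j) := ha
        rw [Finset.mem_filter]
        exact ⟨mem_univ _, (Multiset.mem_filter.1 ha').2⟩
      · -- backward lands in source
        intro C hC
        rw [Fintype.mem_piFinset] at hC
        have hmem : ∀ (k : Fin l) (a : Fin q), a ∈ (C k).1 → res a = e k := by
          intro k a ha
          have := (Finset.mem_sym_iff.1 (hC k)) a ha
          exact (Finset.mem_filter.1 this).2
        have hfil : ∀ j : Fin l,
            (∑ k : Fin l, (C k).1).filter (fun x => res x = e j) = (C j).1 := by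
          intro j
          rw [filter_finset_sum]
          rw [Finset.sum_eq_single j]
          · exact Multiset.filter_eq_self.2 (fun a ha => hmem j a ha)
          · intro k _ hk
            refine Multiset.filter_eq_nil.2 (fun a ha => ?_)
            rw [hmem k a ha]
            exact fun hc => hk (he hc)
          · intro hj; exact absurd (mem_univ j) hj
        refine Finset.mem_filter.2 ?_
        refine ⟨mem_univ _, ?_, ?_⟩
        · -- support equals T
          ext c
          rw [Multiset.mem_toFinset]
          constructor
          · intro hc
            obtain ⟨x, hx, rfl⟩ := Multiset.mem_map.1 hc
            have hx' : x ∈ ∑ k : Fin l, (C k).1 := hx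
            obtain ⟨k, hk⟩ := Multiset.mem_sum.1 hx'
            rw [hmem k x hk.2]
            exact heT k
          · intro hc
            obtain ⟨j, rfl⟩ := hTe c hc
            have hpos : 0 < Multiset.card ((C j).1) := by rw [(C j).2]; exact htp j
            obtain ⟨x, hx⟩ := Multiset.card_pos_iff_exists_mem.1 hpos
            refine Multiset.mem_map.2 ⟨x, ?_, hmem j x hx⟩
            exact Multiset.mem_sum.2 ⟨j, mem_univ _, hx⟩
        · -- counts equal t
          funext j
          show Multiset.card ((∑ k : Fin l, (C k).1).filter (fun x => res x = e j)) = t j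
          rw [hfil j, (C j).2]
      · -- left inverse
        intro B hB
        apply Subtype.ext
        show ∑ j : Fin l, B.1.filter (fun x => res x = e j) = B.1
        exact hpart B (Finset.mem_filter.1 hB).2.1
      · -- right inverse
        intro C hC
        rw [Fintype.mem_piFinset] at hC
        have hmem : ∀ (k : Fin l) (a : Fin q), a ∈ (C k).1 → res a = e k := by
          intro k a ha
          have := (Finset.mem_sym_iff.1 (hC k)) a ha
          exact (Finset.mem_filter.1 this).2
        funext j
        apply Subtype.ext
        show (∑ k : Fin l, (C k).1).filter (fun x => res x = e j) = (C j).1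
        rw [filter_finset_sum]
        rw [Finset.sum_eq_single j]
        · exact Multiset.filter_eq_self.2 (fun a ha => hmem j a ha)
        · intro k _ hk
          refine Multiset.filter_eq_nil.2 (fun a ha => ?_)
          rw [hmem k a ha]
          exact fun hc => hk (he hc)
        · intro hj; exact absurd (mem_univ j) hj
    rw [key, Fintype.card_piFinset]
    refine Finset.prod_congr rfl fun j _ => ?_
    rw [card_finset_sym]
    have hf : (univ.filter (fun x : Fin q => res x = e j)).card = p ^ (r - 1) :=
      fiber_card p r hp hr (e j)
    rw [hf]
  · -- fiberwise map hits the index set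
    intro B hB
    have hB := Finset.mem_filter.1 (Finset.mem_coe.1 hB)
    refine Finset.mem_coe.2 (Finset.mem_filter.2 ?_)
    refine ⟨Finset.Nat.mem_antidiagonalTuple.2 ?_, ?_⟩
    · rw [← card_finset_sum, hpart B hB.2, B.2]
    · intro j
      have : e j ∈ (Multiset.map res B.1).toFinset := hB.2 ▸ heT j
      obtain ⟨x, hx, hxe⟩ := Multiset.mem_map.1 (Multiset.mem_toFinset.1 this)
      have : x ∈ B.1.filter (fun x => res x = e j) := Multiset.mem_filter.2 ⟨hx, hxe⟩
      exact Multiset.card_pos_iff_exists_mem.2 ⟨x, this⟩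

lemma cardA (p r : ℕ) (hp : p.Prime) (hr : 1 ≤ r) (negT : Finset (ZMod p)) :
    (univ.filter (fun x : Fin (p ^ r) => ((x : ℕ) : ZMod p) ∉ negT)).card
      = p ^ r - p ^ (r - 1) * negT.card := by
  classical
  have h1 : (univ.filter (fun x : Fin (p ^ r) => ((x : ℕ) : ZMod p) ∈ negT)).card
      = p ^ (r - 1) * negT.card := by
    rw [Finset.card_eq_sum_card_fiberwise
      (f := fun x : Fin (p ^ r) => ((x : ℕ) : ZMod p)) (t := negT)
      (s := univ.filter (fun x : Fin (p ^ r) => ((x : ℕ) : ZMod p) ∈ negT))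
      (fun x hx => (Finset.mem_filter.1 hx).2)]
    rw [Finset.sum_congr rfl (fun c hc => ?_), Finset.sum_const, smul_eq_mul, mul_comm]
    rw [Finset.filter_filter]
    have : (univ.filter (fun x : Fin (p ^ r) =>
        ((x : ℕ) : ZMod p) ∈ negT ∧ ((x : ℕ) : ZMod p) = c))
        = univ.filter (fun x : Fin (p ^ r) => ((x : ℕ) : ZMod p) = c) := by
      refine Finset.filter_congr fun x _ => ?_
      constructor
      · exact fun h => h.2
      · exact fun h => ⟨h ▸ hc, h⟩
    rw [this, fiber_card p r hp hr c]
  have h2 := Finset.card_filter_add_card_filter_not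
    (s := (univ : Finset (Fin (p ^ r)))) (p := fun x => ((x : ℕ) : ZMod p) ∈ negT)
  rw [Finset.card_univ, Fintype.card_fin] at h2
  omega

theorem stmt_15 (p r m n : ℕ) (hp : p.Prime) (hr : 1 ≤ r) (hm : 1 ≤ m) (hn : 1 ≤ n) :
    (Finset.univ.filter (fun ab : (Fin m → Fin (p ^ r)) × (Fin n → Fin (p ^ r)) =>
        (∀ i j : Fin m, i ≤ j → ab.1 i ≤ ab.1 j) ∧
        (∀ i j : Fin n, i ≤ j → ab.2 i ≤ ab.2 j) ∧
        ∀ (i : Fin m) (j : Fin n), ¬ p ∣ ((ab.1 i : ℕ) + (ab.2 j : ℕ)))).card =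
      ∑ l ∈ Finset.Icc 1 (min (p - 1) n),
        Nat.choose p l * Nat.choose (p ^ r - (p ^ r / p) * l + m - 1) m *
          ∑ t ∈ (Finset.Nat.antidiagonalTuple l n).filter (fun t => ∀ j, 0 < t j),
            ∏ j, Nat.choose (p ^ r / p + t j - 1) (t j) := by
  classical
  haveI : NeZero p := ⟨hp.pos.ne'⟩
  have hq1 : p ^ (r - 1) * p = p ^ r := by rw [← pow_succ, Nat.sub_add_cancel hr]
  have hqdiv : p ^ r / p = p ^ (r - 1) := by
    conv_lhs => rw [← hq1]
    exact Nat.mul_div_cancel _ hp.pos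
  have hdvd : ∀ x y : Fin (p ^ r), (p ∣ ((x : ℕ) + (y : ℕ))) ↔
      ((x : ℕ) : ZMod p) = - ((y : ℕ) : ZMod p) := by
    intro x y
    rw [← ZMod.natCast_eq_zero_iff, Nat.cast_add, ← eq_neg_iff_add_eq_zero]
  -- Step 1: pass to multisets
  have step1 : (Finset.univ.filter (fun ab : (Fin m → Fin (p ^ r)) × (Fin n → Fin (p ^ r)) =>
        (∀ i j : Fin m, i ≤ j → ab.1 i ≤ ab.1 j) ∧
        (∀ i j : Fin n, i ≤ j → ab.2 i ≤ ab.2 j) ∧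
        ∀ (i : Fin m) (j : Fin n), ¬ p ∣ ((ab.1 i : ℕ) + (ab.2 j : ℕ)))).card
      = ((univ : Finset (Sym (Fin (p ^ r)) m × Sym (Fin (p ^ r)) n)).filter
          (fun AB => ∀ x : Fin (p ^ r), x ∈ AB.1.1 → ∀ y : Fin (p ^ r), y ∈ AB.2.1 → ¬ p ∣ ((x : ℕ) + (y : ℕ)))).card := by
    refine Finset.card_bij
      (fun ab _ => (⟨(List.ofFn ab.1 : Multiset (Fin (p ^ r))), by simp⟩,
                    ⟨(List.ofFn ab.2 : Multiset (Fin (p ^ r))), by simp⟩)) ?_ ?_ ?_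
    · intro ab hab
      obtain ⟨-, -, hcond⟩ := (Finset.mem_filter.1 hab).2
      rw [Finset.mem_filter]
      refine ⟨mem_univ _, ?_⟩
      intro x hx y hy
      obtain ⟨i, rfl⟩ := List.mem_ofFn.1 (Multiset.mem_coe.1 hx)
      obtain ⟨j, rfl⟩ := List.mem_ofFn.1 (Multiset.mem_coe.1 hy)
      exact hcond i j
    · intro ab hab ab' hab' heq
      obtain ⟨hmono1, hmono2, -⟩ := (Finset.mem_filter.1 hab).2
      obtain ⟨hmono1', hmono2', -⟩ := (Finset.mem_filter.1 hab').2
      have e1 : (↑(List.ofFn ab.1) : Multiset (Fin (p ^ r))) = ↑(List.ofFn ab'.1) :=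
        congrArg (·.1.1) heq
      have e2 : (↑(List.ofFn ab.2) : Multiset (Fin (p ^ r))) = ↑(List.ofFn ab'.2) :=
        congrArg (·.2.1) heq
      have l1 : List.ofFn ab.1 = List.ofFn ab'.1 :=
        (Multiset.coe_eq_coe.1 e1).eq_of_sortedLE
          ((List.sortedLE_ofFn_iff).2 (monotone_iff_forall_lt.2
            fun i j hij => hmono1 i j hij.le))
          ((List.sortedLE_ofFn_iff).2 (monotone_iff_forall_lt.2
            fun i j hij => hmono1' i j hij.le))
      have l2 : List.ofFn ab.2 = List.ofFn ab'.2 :=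
        (Multiset.coe_eq_coe.1 e2).eq_of_sortedLE
          ((List.sortedLE_ofFn_iff).2 (monotone_iff_forall_lt.2
            fun i j hij => hmono2 i j hij.le))
          ((List.sortedLE_ofFn_iff).2 (monotone_iff_forall_lt.2
            fun i j hij => hmono2' i j hij.le))
      exact Prod.ext (List.ofFn_inj.1 l1) (List.ofFn_inj.1 l2)
    · intro AB hAB
      obtain ⟨A, B⟩ := AB
      have hcond := (Finset.mem_filter.1 hAB).2
      have hlA : (A.1.sort (· ≤ ·)).length = m := by rw [Multiset.length_sort, A.2]
      have hlB : (B.1.sort (· ≤ ·)).length = n := by rw [Multiset.length_sort, B.2]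
      set fA : Fin m → Fin (p ^ r) := fun i => (A.1.sort (· ≤ ·)).get (Fin.cast hlA.symm i)
        with hfA
      set fB : Fin n → Fin (p ^ r) := fun j => (B.1.sort (· ≤ ·)).get (Fin.cast hlB.symm j)
        with hfB
      have hofA : List.ofFn fA = A.1.sort (· ≤ ·) := by
        apply List.ext_getElem (by simp [hlA])
        intro i h1 h2
        simp [hfA]
        rfl
      have hofB : List.ofFn fB = B.1.sort (· ≤ ·) := by
        apply List.ext_getElem (by simp [hlB])
        intro i h1 h2
        simp [hfB]
        rfl
      refine ⟨(fA, fB), ?_, ?_⟩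
      · rw [Finset.mem_filter]
        refine ⟨mem_univ _, ?_, ?_, ?_⟩
        · intro i j hij
          exact (Multiset.pairwise_sort _ _).rel_get_of_le (by exact hij)
        · intro i j hij
          exact (Multiset.pairwise_sort _ _).rel_get_of_le (by exact hij)
        · intro i j
          refine hcond _ ?_ _ ?_
          · show fA i ∈ A.1
            rw [← Multiset.mem_sort (· ≤ ·)]
            exact List.get_mem _ _
          · show fB j ∈ B.1
            rw [← Multiset.mem_sort (· ≤ ·)]
            exact List.get_mem _ _
      · refine Prod.ext ?_ ?_
        · apply Subtype.ext
          show (↑(List.ofFn fA) : Multiset (Fin (p ^ r))) = A.1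
          rw [hofA, Multiset.sort_eq]
        · apply Subtype.ext
          show (↑(List.ofFn fB) : Multiset (Fin (p ^ r))) = B.1
          rw [hofB, Multiset.sort_eq]
  rw [step1]
  -- Step 2: fiber over residue support of B
  rw [Finset.card_eq_sum_card_fiberwise
    (f := fun AB : Sym (Fin (p ^ r)) m × Sym (Fin (p ^ r)) n =>
      (Multiset.map (fun x : Fin (p ^ r) => ((x : ℕ) : ZMod p)) AB.2.1).toFinset)
    (t := (univ : Finset (Finset (ZMod p)))) (fun _ _ => mem_univ _)]
  -- Step 3: per-T product splitting
  have step3 : ∀ T : Finset (ZMod p),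
      (((univ : Finset (Sym (Fin (p ^ r)) m × Sym (Fin (p ^ r)) n)).filter
          (fun AB => ∀ x : Fin (p ^ r), x ∈ AB.1.1 → ∀ y : Fin (p ^ r), y ∈ AB.2.1 →
            ¬ p ∣ ((x : ℕ) + (y : ℕ)))).filter
        (fun AB => (Multiset.map (fun x : Fin (p ^ r) => ((x : ℕ) : ZMod p)) AB.2.1).toFinset
            = T)).card
      = (p ^ r - p ^ (r - 1) * T.card + m - 1).choose m *
        ∑ t ∈ (Finset.Nat.antidiagonalTuple T.card n).filter (fun t => ∀ j, 0 < t j),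
          ∏ j, (p ^ (r - 1) + t j - 1).choose (t j) := by
    intro T
    have hprod : ((univ : Finset (Sym (Fin (p ^ r)) m × Sym (Fin (p ^ r)) n)).filter
          (fun AB => ∀ x : Fin (p ^ r), x ∈ AB.1.1 → ∀ y : Fin (p ^ r), y ∈ AB.2.1 →
            ¬ p ∣ ((x : ℕ) + (y : ℕ)))).filter
        (fun AB => (Multiset.map (fun x : Fin (p ^ r) => ((x : ℕ) : ZMod p)) AB.2.1).toFinset
            = T)
        = ((univ.filter (fun x : Fin (p ^ r) =>
              ((x : ℕ) : ZMod p) ∉ T.image (fun c => -c))).sym m) ×ˢ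
          ((univ : Finset (Sym (Fin (p ^ r)) n)).filter
            (fun B => (Multiset.map (fun x : Fin (p ^ r) => ((x : ℕ) : ZMod p)) B.1).toFinset
              = T)) := by
      ext AB
      rw [Finset.filter_filter, Finset.mem_filter, Finset.mem_product, Finset.mem_sym_iff,
        Finset.mem_filter]
      constructor
      · rintro ⟨-, hcond, hsupp⟩
        refine ⟨fun a ha => ?_, mem_univ _, hsupp⟩
        rw [Finset.mem_filter]
        refine ⟨mem_univ _, fun hmem => ?_⟩
        obtain ⟨c, hc, hceq⟩ := Finset.mem_image.1 hmem
        rw [← hsupp] at hc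
        obtain ⟨y, hy, hyc⟩ := Multiset.mem_map.1 (Multiset.mem_toFinset.1 hc)
        refine hcond a ha y hy ((hdvd a y).2 ?_)
        rw [hyc, hceq]
      · rintro ⟨hA, -, hsupp⟩
        refine ⟨mem_univ _, ?_, hsupp⟩
        intro x hx y hy hdvd'
        have hxs := Finset.mem_filter.1 (hA x hx)
        have hyT : ((y : ℕ) : ZMod p) ∈ T := by
          rw [← hsupp]
          exact Multiset.mem_toFinset.2 (Multiset.mem_map_of_mem _ hy)
        refine hxs.2 (Finset.mem_image.2 ⟨((y : ℕ) : ZMod p), hyT, ?_⟩)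
        exact ((hdvd x y).1 hdvd').symm
    rw [hprod, Finset.card_product, card_finset_sym,
      cardA p r hp hr _, Finset.card_image_of_injective _ neg_injective,
      cardB p r n hp hr hn T]
  rw [Finset.sum_congr rfl (fun T _ => step3 T)]
  -- Step 4: group subsets by cardinality
  rw [show (univ : Finset (Finset (ZMod p))) = (univ : Finset (ZMod p)).powerset
      from Finset.powerset_univ.symm]
  rw [Finset.sum_powerset]
  have hcardzp : (univ : Finset (ZMod p)).card = p := by
    rw [Finset.card_univ, ZMod.card]
  have hinner : ∀ j : ℕ,
      (∑ T ∈ Finset.powersetCard j (univ : Finset (ZMod p)),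
        (p ^ r - p ^ (r - 1) * T.card + m - 1).choose m *
          ∑ t ∈ (Finset.Nat.antidiagonalTuple T.card n).filter (fun t => ∀ j, 0 < t j),
            ∏ j, (p ^ (r - 1) + t j - 1).choose (t j))
      = Nat.choose p j * ((p ^ r - p ^ (r - 1) * j + m - 1).choose m *
          ∑ t ∈ (Finset.Nat.antidiagonalTuple j n).filter (fun t => ∀ j, 0 < t j),
            ∏ j, (p ^ (r - 1) + t j - 1).choose (t j)) := by
    intro j
    have hc : ∀ T ∈ Finset.powersetCard j (univ : Finset (ZMod p)),
        ((p ^ r - p ^ (r - 1) * T.card + m - 1).choose m *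
          ∑ t ∈ (Finset.Nat.antidiagonalTuple T.card n).filter (fun t => ∀ j, 0 < t j),
            ∏ j, (p ^ (r - 1) + t j - 1).choose (t j))
        = ((p ^ r - p ^ (r - 1) * j + m - 1).choose m *
          ∑ t ∈ (Finset.Nat.antidiagonalTuple j n).filter (fun t => ∀ j, 0 < t j),
            ∏ j, (p ^ (r - 1) + t j - 1).choose (t j)) := by
      intro T hT
      have h := (Finset.mem_powersetCard.1 hT).2
      subst h
      rfl
    rw [Finset.sum_congr rfl hc, Finset.sum_const, Finset.card_powersetCard, hcardzp,
      smul_eq_mul]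
  rw [hcardzp]
  rw [Finset.sum_congr rfl (fun j _ => hinner j)]
  -- drop vanishing terms
  have hsub : Finset.Icc 1 (min (p - 1) n) ⊆ Finset.range (p + 1) := by
    intro x hx
    rw [Finset.mem_Icc] at hx
    rw [Finset.mem_range]
    have := min_le_left (p - 1) n
    omega
  have hzero : ∀ x ∈ Finset.range (p + 1), x ∉ Finset.Icc 1 (min (p - 1) n) →
      Nat.choose p x * ((p ^ r - p ^ (r - 1) * x + m - 1).choose m *
        ∑ t ∈ (Finset.Nat.antidiagonalTuple x n).filter (fun t => ∀ j, 0 < t j),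
          ∏ j, (p ^ (r - 1) + t j - 1).choose (t j)) = 0 := by
    intro x hx hnx
    rw [Finset.mem_range] at hx
    rw [Finset.mem_Icc] at hnx
    push_neg at hnx
    by_cases hx0 : x = 0
    · subst hx0
      rw [show ((Finset.Nat.antidiagonalTuple 0 n).filter (fun t => ∀ j, 0 < t j)) = ∅
          from ?_]
      · simp
      · refine Finset.eq_empty_of_forall_notMem fun t ht => ?_
        have := Finset.Nat.mem_antidiagonalTuple.1 (Finset.mem_filter.1 ht).1
        simp at this
        omega
    · have hxmin : min (p - 1) n < x := hnx (by omega)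
      have hminor : min (p - 1) n = p - 1 ∨ min (p - 1) n = n := min_choice _ _
      by_cases hxn : n < x
      · rw [show ((Finset.Nat.antidiagonalTuple x n).filter (fun t => ∀ j, 0 < t j)) = ∅
            from ?_]
        · simp
        · refine Finset.eq_empty_of_forall_notMem fun t ht => ?_
          obtain ⟨ht1, ht2⟩ := Finset.mem_filter.1 ht
          have hsum := Finset.Nat.mem_antidiagonalTuple.1 ht1
          have : (x : ℕ) ≤ ∑ j : Fin x, t j := by
            calc (x : ℕ) = ∑ _j : Fin x, 1 := by simp
            _ ≤ ∑ j : Fin x, t j := Finset.sum_le_sum (fun j _ => ht2 j)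
          omega
      · have hxp : x = p := by rcases hminor with h | h <;> rw [h] at hxmin <;> omega
        subst hxp
        rw [hq1, Nat.sub_self, Nat.zero_add,
          Nat.choose_eq_zero_of_lt (show m - 1 < m by omega)]
        simp
  rw [← Finset.sum_subset hsub hzero]
  refine Finset.sum_congr rfl fun l hl => ?_
  rw [hqdiv, mul_assoc]
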